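/- Consider one iteration of the SPEA2 with parent population size μ on a multi-objective problem. Let S_t be the multiset of non-dominated individuals of the combined parent and offspring population, F_t the set of their distinct objective values, and for u ∈ ℝ^m let A_u = {x ∈ S_t : f(x) = u}. Then at least min{|A_u|, ⌊μ/|F_t|⌋} individuals from A_u survive into the next parent population. -/

import Mathlib

open Classical in
/-- The sorted (increasing) list of distances in objective space from `f x` to the other
members of the multiset `A` (one copy of `x` removed): its `k`-th entry is `σ_k(x)`. -/
noncomputable def sigmaList {Ωs : Type*} {m : ℕ} (f : Ωs → EuclideanSpace ℝ (Fin m))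
    (A : Multiset Ωs) (x : Ωs) : List ℝ :=
  ((A.erase x).map fun y => ‖f x - f y‖).sort (· ≤ ·)

/-- `x ≤_d y` w.r.t. the multiset `A`: the vector `(σ_k(x))_k` is lexicographically at
most `(σ_k(y))_k`. -/
noncomputable def sigmaLE {Ωs : Type*} {m : ℕ} (f : Ωs → EuclideanSpace ℝ (Fin m))
    (A : Multiset Ωs) (x y : Ωs) : Prop :=
  sigmaList f A x = sigmaList f A y ∨
    List.Lex (· < ·) (sigmaList f A x) (sigmaList f A y)

open Classical in
/-- One elimination step of SPEA2: remove from `S` an element minimal w.r.t. `≤_d`. -/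
noncomputable def eliminateStep {Ωs : Type*} {m : ℕ} (f : Ωs → EuclideanSpace ℝ (Fin m))
    (S S' : Multiset Ωs) : Prop :=
  ∃ x ∈ S, (∀ y ∈ S, sigmaLE f S x y) ∧ S' = S.erase x

open Classical

/-- Sorted nonneg lists of equal length: more zeros means lexicographically smaller. -/
private lemma lex_of_zeros {l1 l2 : List ℝ}
    (h1 : l1.Pairwise (· ≤ ·)) (h2 : l2.Pairwise (· ≤ ·))
    (hn1 : ∀ a ∈ l1, 0 ≤ a) (hn2 : ∀ a ∈ l2, 0 ≤ a)
    (hlen : l1.length = l2.length)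
    (hz : l1.countP (fun a => decide (a = 0)) < l2.countP (fun a => decide (a = 0))) :
    List.Lex (· < ·) l2 l1 := by
  induction l1 generalizing l2 with
  | nil =>
    cases l2 with
    | nil => simp at hz
    | cons b t2 => simp at hlen
  | cons a t1 ih =>
    cases l2 with
    | nil => simp only [List.countP_nil] at hz; omega
    | cons b t2 =>
      have hb0 : b = 0 := by
        have hpos : 0 < (b :: t2).countP (fun a => decide (a = 0)) :=
          lt_of_le_of_lt (Nat.zero_le _) hz
        obtain ⟨c, hc, hc0⟩ := List.countP_pos_iff.mp hpos
        simp only [decide_eq_true_eq] at hc0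
        rcases List.mem_cons.mp hc with rfl | hct
        · exact hc0
        · have := (List.pairwise_cons.mp h2).1 c hct
          have := hn2 b List.mem_cons_self
          linarith [hc0 ▸ this]
      subst hb0
      by_cases ha : a = 0
      · subst ha
        simp at hz
        exact List.Lex.cons (ih (List.pairwise_cons.mp h1).2 (List.pairwise_cons.mp h2).2
          (fun x hx => hn1 x (List.mem_cons_of_mem _ hx))
          (fun x hx => hn2 x (List.mem_cons_of_mem _ hx))
          (by simpa using hlen) (by omega))
      · exact List.Lex.rel (lt_of_le_of_ne (hn1 a List.mem_cons_self) (Ne.symm ha))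

private lemma sigmaList_sorted {Ωs : Type*} {m : ℕ} (f : Ωs → EuclideanSpace ℝ (Fin m))
    (A : Multiset Ωs) (x : Ωs) : (sigmaList f A x).Pairwise (· ≤ ·) :=
  Multiset.pairwise_sort ..

private lemma sigmaList_nonneg {Ωs : Type*} {m : ℕ} (f : Ωs → EuclideanSpace ℝ (Fin m))
    (A : Multiset Ωs) (x : Ωs) : ∀ a ∈ sigmaList f A x, 0 ≤ a := by
  intro a ha
  rw [sigmaList, Multiset.mem_sort, Multiset.mem_map] at ha
  obtain ⟨y, -, rfl⟩ := ha
  exact norm_nonneg _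

private lemma sigmaList_length {Ωs : Type*} {m : ℕ} (f : Ωs → EuclideanSpace ℝ (Fin m))
    (A : Multiset Ωs) (x : Ωs) (hx : x ∈ A) :
    (sigmaList f A x).length = Multiset.card A - 1 := by
  rw [sigmaList, Multiset.length_sort, Multiset.card_map, Multiset.card_erase_of_mem hx]
  rfl

private lemma countP_erase {Ωs : Type*} (p : Ωs → Prop) (A : Multiset Ωs) (x : Ωs)
    (hx : x ∈ A) :
    (A.erase x).countP p = A.countP p - (if p x then 1 else 0) := by
  conv_rhs => rw [← Multiset.cons_erase hx]
  rw [Multiset.countP_cons]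
  omega

private lemma sigmaList_zeros {Ωs : Type*} {m : ℕ} (f : Ωs → EuclideanSpace ℝ (Fin m))
    (A : Multiset Ωs) (x : Ωs) (hx : x ∈ A) :
    (sigmaList f A x).countP (fun a => decide (a = 0)) =
      A.countP (fun z => f z = f x) - 1 := by
  have h1 : (sigmaList f A x).countP (fun a => decide (a = 0)) =
      Multiset.countP (fun a : ℝ => a = 0) (((A.erase x).map fun y => ‖f x - f y‖)) := by
    rw [sigmaList, ← Multiset.coe_countP, Multiset.sort_eq]
  rw [h1, Multiset.countP_map, ← Multiset.countP_eq_card_filter]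
  have h2 : (A.erase x).countP (fun y => ‖f x - f y‖ = 0) =
      (A.erase x).countP (fun z => f z = f x) := by
    apply Multiset.countP_congr rfl
    intro z _
    simp only [eq_iff_iff, norm_eq_zero, sub_eq_zero]
    exact eq_comm
  rw [h2]
  have := countP_erase (fun z => f z = f x) _ _ hx
  rw [if_pos rfl] at this
  convert this

/-- A `≤_d`-minimal element belongs to a class of maximal size. -/
private lemma class_le_of_min {Ωs : Type*} {m : ℕ} {f : Ωs → EuclideanSpace ℝ (Fin m)}
    {A : Multiset Ωs} {x y : Ωs} (hx : x ∈ A) (hy : y ∈ A)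
    (hmin : sigmaLE f A x y) :
    A.countP (fun z => f z = f y) ≤ A.countP (fun z => f z = f x) := by
  by_contra h
  push_neg at h
  have hx1 : 1 ≤ A.countP (fun z => f z = f x) := by
    have : 0 < A.countP (fun z => f z = f x) :=
      Multiset.countP_pos.mpr ⟨x, hx, rfl⟩
    omega
  have hzlt : (sigmaList f A x).countP (fun a => decide (a = 0)) <
      (sigmaList f A y).countP (fun a => decide (a = 0)) := by
    rw [sigmaList_zeros f A x hx, sigmaList_zeros f A y hy]
    omega
  have hlex : List.Lex (· < ·) (sigmaList f A y) (sigmaList f A x) :=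
    lex_of_zeros (sigmaList_sorted f A x) (sigmaList_sorted f A y)
      (sigmaList_nonneg f A x) (sigmaList_nonneg f A y)
      (by rw [sigmaList_length f A x hx, sigmaList_length f A y hy]) hzlt
  rcases hmin with heq | hlt
  · rw [heq] at hzlt; omega
  · exact (List.Lex.asymm (· < ·)).asymm _ _ hlt hlex

private lemma card_le_classes {Ωs : Type*} {m : ℕ} (f : Ωs → EuclideanSpace ℝ (Fin m))
    (A : Multiset Ωs) (c : ℕ)
    (h : ∀ y ∈ A, A.countP (fun z => f z = f y) ≤ c) :
    Multiset.card A ≤ (A.map f).toFinset.card * c := by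
  have h1 : Multiset.card A = ∑ v ∈ (A.map f).toFinset, (A.map f).count v := by
    rw [Multiset.toFinset_sum_count_eq, Multiset.card_map]
  rw [h1]
  calc ∑ v ∈ (A.map f).toFinset, (A.map f).count v
      ≤ ∑ _v ∈ (A.map f).toFinset, c := by
        apply Finset.sum_le_sum
        intro v hv
        rw [Multiset.mem_toFinset, Multiset.mem_map] at hv
        obtain ⟨y, hy, rfl⟩ := hv
        have : (A.map f).count (f y) = A.countP (fun z => f z = f y) := by
          rw [Multiset.count_map, ← Multiset.countP_eq_card_filter]
          exact Multiset.countP_congr rfl (fun z _ => by simp [eq_comm])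
        rw [this]
        exact h y hy
    _ = (A.map f).toFinset.card * c := by rw [Finset.sum_const, smul_eq_mul]

theorem stmt_7 {Ωs : Type*} {m : ℕ} (f : Ωs → EuclideanSpace ℝ (Fin m))
    (μ : ℕ) (hμ : 1 ≤ μ) (S : ℕ → Multiset Ωs) (hμcard : μ < (S 0).card)
    (hstep : ∀ i < (S 0).card - μ, eliminateStep f (S i) (S (i + 1)))
    (u : EuclideanSpace ℝ (Fin m)) :
    min ((S 0).countP fun x => f x = u) (μ / ((S 0).map f).toFinset.card) ≤
      (S ((S 0).card - μ)).countP fun x => f x = u := by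
  set N := (S 0).card - μ with hN
  set F := ((S 0).map f).toFinset.card with hF
  set q := μ / F with hq
  have key : ∀ i ≤ N, S i ≤ S 0 ∧ (S i).card = (S 0).card - i ∧
      min ((S 0).countP fun x => f x = u) q ≤ (S i).countP fun x => f x = u := by
    intro i
    induction i with
    | zero => exact fun _ => ⟨le_rfl, rfl, min_le_left _ _⟩
    | succ i ih =>
      intro hiN
      have hi : i < N := by omega
      obtain ⟨hle, hcard, hcnt⟩ := ih (by omega)
      obtain ⟨x, hxS, hmin, hS'⟩ := hstep i hi
      have hcardi : μ < (S i).card := by omega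
      refine ⟨?_, ?_, ?_⟩
      · rw [hS']; exact le_trans (Multiset.erase_le _ _) hle
      · rw [hS', Multiset.card_erase_of_mem hxS, Nat.pred_eq_sub_one]; omega
      · have herase : (S (i+1)).countP (fun z => f z = u) =
            (S i).countP (fun z => f z = u) - (if f x = u then 1 else 0) := by
          rw [hS']; convert countP_erase (fun z => f z = u) _ _ hxS
        by_cases hfx : f x = u
        · rw [if_pos hfx] at herase
          by_cases hqlt : q < (S i).countP (fun z => f z = u)
          · have := min_le_right ((S 0).countP fun z => f z = u) q
            omega
          · exfalso
            push_neg at hqlt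
            have hmax : ∀ y ∈ S i, (S i).countP (fun z => f z = f y) ≤
                (S i).countP (fun z => f z = u) := by
              intro y hy
              rw [← hfx]
              exact class_le_of_min hxS hy (hmin y hy)
            have hFi : ((S i).map f).toFinset.card ≤ F := by
              apply Finset.card_le_card
              intro v hv
              rw [Multiset.mem_toFinset] at hv ⊢
              exact Multiset.mem_of_le (Multiset.map_le_map hle) hv
            have h1 : (S i).card ≤ ((S i).map f).toFinset.card *
                (S i).countP (fun z => f z = u) := card_le_classes f _ _ hmax
            have h2 : ((S i).map f).toFinset.card * (S i).countP (fun z => f z = u)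
                ≤ F * q := Nat.mul_le_mul hFi hqlt
            have h3 : F * q ≤ μ := by
              rw [hq, mul_comm]
              exact Nat.div_mul_le_self μ F
            omega
        · rw [if_neg hfx] at herase
          rw [herase]
          omega
  exact (key N le_rfl).2.2
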